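/- Let E₃ be the elliptic curve over ℚ with affine Weierstrass equation y² = x(x − 1)(x − 1/5). Then E₃ has a quadratic twist of rank 0: there exists a nonzero rational number d such that every rational point of the quadratic twist E₃^(d), given by the affine Weierstrass equation y² = x(x − d)(x − d/5), has finite order in the group E₃^(d)(ℚ). -/

import Mathlib

namespace E3Twist

lemma isCoprime_of_linear {X Y a b : ℤ} (h : IsCoprime a b) (c1 c2 c3 c4 : ℤ)
    (h1 : c1*X + c2*Y = a) (h2 : c3*X + c4*Y = b) : IsCoprime X Y := by
  obtain ⟨u, v, huv⟩ := h
  exact ⟨u*c1 + v*c3, u*c2 + v*c4, by linear_combination u*h1 + v*h2 + huv⟩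

lemma isCoprime_of_linear2 {X Y a b : ℤ} (h : IsCoprime a b) (hX : Odd X) (c1 c2 c3 c4 : ℤ)
    (h1 : c1*X + c2*Y = 2*a) (h2 : c3*X + c4*Y = 2*b) : IsCoprime X Y := by
  obtain ⟨u, v, huv⟩ := h
  obtain ⟨k, hk⟩ := hX
  refine ⟨1 - k*(u*c1 + v*c3), -(k*(u*c2 + v*c4)), ?_⟩
  linear_combination (-k*u)*h1 + (-k*v)*h2 + (-2*k)*huv + hk

lemma isCoprime_of_linear4 {X Y a b : ℤ} (h : IsCoprime a b) (hX : Odd X) (c1 c2 c3 c4 : ℤ)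
    (h1 : c1*X + c2*Y = 4*a) (h2 : c3*X + c4*Y = 4*b) : IsCoprime X Y := by
  obtain ⟨u, v, huv⟩ := h
  obtain ⟨k, hk⟩ := hX
  refine ⟨X - (k^2+k)*(u*c1 + v*c3), -((k^2+k)*(u*c2 + v*c4)), ?_⟩
  linear_combination (-(k^2+k)*u)*h1 + (-(k^2+k)*v)*h2 + (-4*(k^2+k))*huv + (X + 2*k + 1)*hk

lemma sq_of_coprime_pos {a b c : ℤ} (h : IsCoprime a b) (heq : a*b = c^2) (ha : 0 < a) :
    ∃ r : ℤ, 0 < r ∧ a = r^2 := by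
  obtain ⟨r, hr | hr⟩ := Int.sq_of_isCoprime h heq
  · refine ⟨|r|, abs_pos.mpr ?_, by rwa [sq_abs]⟩
    rintro rfl
    simp at hr
    omega
  · exfalso; nlinarith [sq_nonneg r]

lemma eq_of_sq_eq_sq {a b : ℤ} (ha : 0 ≤ a) (hb : 0 ≤ b) (h : a^2 = b^2) : a = b := by
  have h2 : (a - b)*(a + b) = 0 := by linear_combination h
  rcases mul_eq_zero.mp h2 with h3 | h3 <;> omega

lemma odd_sq_mod8 {s : ℤ} (h : Odd s) : ∃ k, s^2 = 8*k + 1 := by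
  obtain ⟨m, rfl⟩ := h
  obtain ⟨t, ht⟩ := Int.even_mul_succ_self m
  exact ⟨t, by linear_combination 4*ht⟩

lemma even_sq {a : ℤ} (h : Even a) : Even (a^2) := by
  obtain ⟨r, rfl⟩ := h; exact ⟨2*r*r, by ring⟩

lemma odd_sq {a : ℤ} (h : Odd a) : Odd (a^2) := by
  obtain ⟨r, rfl⟩ := h; exact ⟨2*r^2+2*r, by ring⟩

lemma odd_of_sq_odd {a X : ℤ} (hX : Odd X) (h : X = a^2) : Odd a := by
  rcases Int.even_or_odd a with hev | hod
  · exact absurd (h ▸ even_sq hev) (Int.not_even_iff_odd.mpr hX)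
  · exact hod

lemma even_of_sq_even {a X : ℤ} (hX : Even X) (h : X = a^2) : Even a := by
  rcases Int.even_or_odd a with hev | hod
  · exact hev
  · exact absurd (h ▸ odd_sq hod) (Int.not_odd_iff_even.mpr hX)

private lemma zmod8_aux : ∀ S A B : ZMod 8,
    S^2 ≠ (2*A+1)^4 + 3*(2*A+1)^2*(2*B+1)^2 + (2*B+1)^4 := by decide

lemma not_sq_eq_quartic_odd {s f g : ℤ} (hf : Odd f) (hg : Odd g) :
    s^2 ≠ f^4 + 3*f^2*g^2 + g^4 := by
  obtain ⟨a, rfl⟩ := hf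
  obtain ⟨b, rfl⟩ := hg
  intro h
  have h8 := congrArg (fun t : ℤ => (t : ZMod 8)) h
  push_cast at h8
  exact zmod8_aux (s : ZMod 8) (a : ZMod 8) (b : ZMod 8) (by linear_combination h8)

private lemma zmod4_aux : ∀ S C D : ZMod 4,
    S^2 ≠ 3*(2*C)^2*(2*D+1)^2 - (2*C)^4 - (2*D+1)^4 := by decide

lemma not_sq_eq_quartic_even_odd {s c d : ℤ} (hc : Even c) (hd : Odd d) :
    s^2 ≠ 3*c^2*d^2 - c^4 - d^4 := by
  obtain ⟨r, rfl⟩ := hc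
  obtain ⟨b, rfl⟩ := hd
  intro h
  have h4 := congrArg (fun t : ℤ => (t : ZMod 4)) h
  push_cast at h4
  refine zmod4_aux (s : ZMod 4) (r : ZMod 4) (b : ZMod 4) (by linear_combination h4)

lemma Rstep {c d σ : ℤ} (hc : 0 < c) (hd : 0 < d) (hcodd : Odd c) (hdeven : Even d)
    (hcop : IsCoprime c d) (heq : σ^2 = c^4 + 3*c^2*d^2 + d^4) :
    ∃ s₁ e₁ z₁ : ℤ, IsCoprime s₁ e₁ ∧ 0 ≤ s₁ ∧ 0 < e₁ ∧ 0 < z₁ ∧ 2*e₁ ≤ c*d ∧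
      z₁^2 = (s₁^2 - e₁^2)*(s₁^2 - 5*e₁^2) := by
  have hτsq : |σ|^2 = c^4 + 3*c^2*d^2 + d^4 := by rw [sq_abs]; exact heq
  have hτpos : 0 < |σ| := by
    rw [abs_pos]
    rintro rfl
    nlinarith [pow_pos hc 4, pow_pos hd 4, mul_pos (pow_pos hc 2) (pow_pos hd 2)]
  have hPT : PythagoreanTriple (c^2+d^2) (c*d) |σ| := by
    show (c^2+d^2)*(c^2+d^2) + (c*d)*(c*d) = (|σ|)*(|σ|)
    linear_combination -hτsq
  have hccd : IsCoprime c (c^2+d^2) := by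
    have h1 : IsCoprime c (d^2) := hcop.pow_right
    have h2 := h1.add_mul_left_right c
    have h3 : d^2 + c*c = c^2 + d^2 := by ring
    rwa [h3] at h2
  have hdcd : IsCoprime d (c^2+d^2) := by
    have h1 : IsCoprime d (c^2) := hcop.symm.pow_right
    have h2 := h1.add_mul_left_right d
    have h3 : c^2 + d*d = c^2 + d^2 := by ring
    rwa [h3] at h2
  have hcdcd : IsCoprime (c^2+d^2) (c*d) := (hccd.mul_left hdcd).symm
  have hgcd1 : Int.gcd (c^2+d^2) (c*d) = 1 := Int.isCoprime_iff_gcd_eq_one.mp hcdcd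
  have hcd2odd : (c^2+d^2) % 2 = 1 := by
    obtain ⟨k, hk⟩ := hcodd
    obtain ⟨r, hr⟩ := hdeven
    have ht : c^2+d^2 = 2*(2*k^2+2*k+2*r^2)+1 := by rw [hk, hr]; ring
    omega
  obtain ⟨m, n, hx, hy, -, hmn, -, hm0⟩ :=
    PythagoreanTriple.coprime_classification' hPT hgcd1 hcd2odd hτpos
  have hmnpos : 0 < m*n := by nlinarith [hy]
  have hmpos : 0 < m := lt_of_le_of_ne hm0 (by rintro rfl; simp at hmnpos)
  have hnpos : 0 < n := by
    rcases mul_pos_iff.mp hmnpos with ⟨-, hn⟩ | ⟨hm', -⟩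
    · exact hn
    · linarith
  obtain ⟨d₁, hd1⟩ : (2:ℤ) ∣ d := hdeven.two_dvd
  have hd1pos : 0 < d₁ := by nlinarith [hd1]
  have hcd1' : IsCoprime c d₁ := hcop.of_isCoprime_of_dvd_right ⟨2, by linarith⟩
  have hmncop : IsCoprime m n := Int.isCoprime_iff_gcd_eq_one.mpr hmn
  have hcd1 : c*d₁ = m*n := by
    have h2 : 2*(c*d₁) = 2*(m*n) := by linear_combination hy - c*hd1
    exact mul_left_cancel₀ two_ne_zero h2
  subst hd1
  obtain ⟨α, β, hαpos, hβ, γ, hγ, hβγ⟩ :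
      ∃ α β : ℤ, 0 < α ∧ c = α*β ∧ ∃ γ, m = α*γ ∧ IsCoprime β γ := by
    have hGpos : 0 < Int.gcd c m :=
      Nat.pos_of_ne_zero fun h0 => hc.ne' (Int.gcd_eq_zero_iff.mp h0).1
    have hαpos : (0:ℤ) < (Int.gcd c m : ℤ) := by exact_mod_cast hGpos
    obtain ⟨β, hβ⟩ : ((Int.gcd c m : ℤ)) ∣ c := Int.gcd_dvd_left _ _
    obtain ⟨γ, hγ⟩ : ((Int.gcd c m : ℤ)) ∣ m := Int.gcd_dvd_right _ _
    refine ⟨_, β, hαpos, hβ, γ, hγ, ?_⟩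
    have hq := Int.gcd_div_gcd_div_gcd hGpos
    have e1 : c / (Int.gcd c m : ℤ) = β := by
      nth_rewrite 1 [hβ]; exact Int.mul_ediv_cancel_left β hαpos.ne'
    have e2 : m / (Int.gcd c m : ℤ) = γ := by
      nth_rewrite 1 [hγ]; exact Int.mul_ediv_cancel_left γ hαpos.ne'
    rw [Int.isCoprime_iff_gcd_eq_one, ← e1, ← e2]
    exact hq
  subst hβ; subst hγ
  have hβpos : 0 < β := by nlinarith []
  have hγpos : 0 < γ := by nlinarith []
  have hkey : β*d₁ = γ*n := by
    have h2 : α*(β*d₁) = α*(γ*n) := by linear_combination hcd1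
    exact mul_left_cancel₀ hαpos.ne' h2
  obtain ⟨δ, hδ⟩ : β ∣ n := hβγ.dvd_of_dvd_mul_left ⟨d₁, by linear_combination -hkey⟩
  subst hδ
  have hδpos : 0 < δ := by nlinarith []
  have hd₁ : d₁ = γ*δ := by
    have h2 : β*d₁ = β*(γ*δ) := by linear_combination hkey
    exact mul_left_cancel₀ hβpos.ne' h2
  subst hd₁
  have hαδ : IsCoprime α δ :=
    (hcd1'.of_isCoprime_of_dvd_left (dvd_mul_right α β)).of_isCoprime_of_dvd_right
      (dvd_mul_left δ γ)
  have hαβ : IsCoprime α β :=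
    (hmncop.of_isCoprime_of_dvd_left (dvd_mul_right α γ)).of_isCoprime_of_dvd_right
      (dvd_mul_right β δ)
  have hγδ : IsCoprime γ δ :=
    (hmncop.of_isCoprime_of_dvd_left (dvd_mul_left γ α)).of_isCoprime_of_dvd_right
      (dvd_mul_left δ β)
  have hmain : β^2*(α^2+δ^2) = γ^2*(α^2-4*δ^2) := by linear_combination hx
  have hγ0 : γ^2 ≠ 0 := pow_ne_zero 2 hγpos.ne'
  obtain ⟨H, hH⟩ : γ^2 ∣ α^2 + δ^2 := by
    have hcp : IsCoprime (γ^2) (β^2) := hβγ.symm.pow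
    exact hcp.dvd_of_dvd_mul_left ⟨α^2-4*δ^2, hmain⟩
  have hH2 : β^2*H = α^2 - 4*δ^2 := by
    have h2 : γ^2*(β^2*H) = γ^2*(α^2-4*δ^2) := by linear_combination hmain - β^2*hH
    exact mul_left_cancel₀ hγ0 h2
  have hHpos : 0 < H := by nlinarith [pow_pos hαpos 2, pow_pos hδpos 2, pow_pos hγpos 2]
  have hH5 : H ∣ 5 := by
    have h5δ : H ∣ 5*δ^2 := ⟨γ^2-β^2, by linear_combination hH + hH2⟩
    have h5α : H ∣ 5*α^2 := ⟨4*γ^2+β^2, by linear_combination 4*hH - hH2⟩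
    obtain ⟨u, v, huv⟩ : IsCoprime (α^2) (δ^2) := hαδ.pow
    have h5 : (5:ℤ) = u*(5*α^2) + v*(5*δ^2) := by linear_combination (-5)*huv
    rw [h5]
    exact dvd_add (h5α.mul_left u) (h5δ.mul_left v)
  have hH15 : H = 1 ∨ H = 5 := by
    have h1 : H ≤ 5 := Int.le_of_dvd (by norm_num) hH5
    interval_cases H <;> omega
  rcases hH15 with rfl | rfl
  · have e1 : γ^2 - δ^2 = α^2 := by linear_combination -hH
    have e2 : γ^2 - 5*δ^2 = β^2 := by linear_combination -hH - hH2
    refine ⟨γ, δ, α*β, hγδ, hγpos.le, hδpos, mul_pos hαpos hβpos, ?_, ?_⟩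
    · have hp : (0:ℤ) < α*β*γ := mul_pos (mul_pos hαpos hβpos) hγpos
      have h1 : 1 ≤ α*β*γ := hp
      have h2 : 2*δ*1 ≤ 2*δ*(α*β*γ) := by
        apply mul_le_mul_of_nonneg_left h1
        linarith
      calc 2*δ = 2*δ*1 := by ring
        _ ≤ 2*δ*(α*β*γ) := h2
        _ = α*β*(2*(γ*δ)) := by ring
    · rw [e1, e2]; ring
  · have e1 : α^2 - β^2 = 4*γ^2 := by
      have h5 : 5*(α^2 - β^2) = 5*(4*γ^2) := by linear_combination 4*hH - hH2
      exact mul_left_cancel₀ (by norm_num : (5:ℤ) ≠ 0) h5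
    have e2 : α^2 - 5*β^2 = 4*δ^2 := by
      have h5 : 5*(α^2 - 5*β^2) = 5*(4*δ^2) := by linear_combination (-5)*hH2
      exact mul_left_cancel₀ (by norm_num : (5:ℤ) ≠ 0) h5
    refine ⟨α, β, 4*(γ*δ), hαβ, hαpos.le, hβpos, by positivity, ?_, ?_⟩
    · have hp : (0:ℤ) < α*γ*δ := mul_pos (mul_pos hαpos hγpos) hδpos
      have h1 : 1 ≤ α*γ*δ := hp
      have h2 : 2*β*1 ≤ 2*β*(α*γ*δ) := by
        apply mul_le_mul_of_nonneg_left h1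
        linarith
      calc 2*β = 2*β*1 := by ring
        _ ≤ 2*β*(α*γ*δ) := h2
        _ = α*β*(2*(γ*δ)) := by ring
    · rw [e1, e2]; ring

/-- Descent in the case `s² > 5e²`, `s+e` odd. -/
lemma descent_pos_opp {s e z : ℤ} (he : 0 < e) (hz : 0 < z) (hcop : IsCoprime s e)
    (heq : z^2 = (s^2-e^2)*(s^2-5*e^2)) (hBpos : 0 < s^2-5*e^2)
    (hAodd : Odd (s^2-e^2)) :
    ∃ s₁ e₁ z₁ : ℤ, IsCoprime s₁ e₁ ∧ 0 ≤ s₁ ∧ 0 < e₁ ∧ 0 < z₁ ∧ e₁ < e ∧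
      z₁^2 = (s₁^2-e₁^2)*(s₁^2-5*e₁^2) := by
  have hApos : 0 < s^2-e^2 := by nlinarith [he]
  have hcop2 : IsCoprime (e^2 : ℤ) (s^2) := hcop.symm.pow
  have hcopAB : IsCoprime (s^2-e^2) (s^2-5*e^2) :=
    isCoprime_of_linear4 hcop2 hAodd 1 (-1) 5 (-1) (by ring) (by ring)
  obtain ⟨a, hapos, ha⟩ := sq_of_coprime_pos hcopAB heq.symm hApos
  obtain ⟨b, hbpos, hb⟩ := sq_of_coprime_pos hcopAB.symm
    (show (s^2-5*e^2)*(s^2-e^2) = z^2 by linear_combination -heq) hBpos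
  have hBodd : Odd (s^2-5*e^2) := by
    have h3 : s^2-5*e^2 = (s^2-e^2) - 4*e^2 := by ring
    rw [h3]; exact hAodd.sub_even ⟨2*e^2, by ring⟩
  have haodd : Odd a := odd_of_sq_odd hAodd ha
  have hbodd : Odd b := odd_of_sq_odd hBodd hb
  have hba : b < a := by
    by_contra hab
    push_neg at hab
    have : a^2 ≤ b^2 := pow_le_pow_left₀ hapos.le hab 2
    nlinarith [he]
  have hcopab : IsCoprime a b :=
    (hcopAB.of_isCoprime_of_dvd_left ⟨a, by rw [ha]; ring⟩).of_isCoprime_of_dvd_right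
      ⟨b, by rw [hb]; ring⟩
  obtain ⟨p, hp⟩ := haodd
  obtain ⟨q, hq⟩ := hbodd
  obtain ⟨u, hu⟩ : ∃ u, a - b = 2*u := ⟨p - q, by omega⟩
  obtain ⟨v, hv⟩ : ∃ v, a + b = 2*v := ⟨p + q + 1, by omega⟩
  have huv : v*u = e^2 := by
    have h4 : 4*(v*u) = 4*e^2 := by
      linear_combination -ha + hb - (a+b)*hu - 2*u*hv
    linarith
  have hupos : 0 < u := by omega
  have hvpos : 0 < v := by omega
  have hcopvu : IsCoprime v u :=
    isCoprime_of_linear hcopab 1 1 1 (-1) (by omega) (by omega)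
  obtain ⟨cc, hccpos, hcc⟩ := sq_of_coprime_pos hcopvu huv hvpos
  obtain ⟨dd, hddpos, hdd⟩ := sq_of_coprime_pos hcopvu.symm
    (show u*v = e^2 by linear_combination huv) hupos
  have he_cd : e = cc*dd := by
    apply eq_of_sq_eq_sq he.le (by positivity)
    linear_combination -huv + u*hcc + cc^2*hdd
  have hcopcd : IsCoprime cc dd :=
    (hcopvu.of_isCoprime_of_dvd_left ⟨cc, by rw [hcc]; ring⟩).of_isCoprime_of_dvd_right
      ⟨dd, by rw [hdd]; ring⟩
  have ha2 : a = cc^2 + dd^2 := by rw [← hcc, ← hdd]; omega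
  have hb2 : b = cc^2 - dd^2 := by rw [← hcc, ← hdd]; omega
  have hs2 : s^2 = cc^4 + 3*cc^2*dd^2 + dd^4 := by
    have h4s : 4*(s^2) = 4*(cc^4 + 3*cc^2*dd^2 + dd^4) := by
      linear_combination 5*ha - hb + (5*(a+cc^2+dd^2))*ha2 - (b+cc^2-dd^2)*hb2
    linarith
  rcases Int.even_or_odd cc with hcce | hcco <;> rcases Int.even_or_odd dd with hdde | hddo
  · exfalso
    have hev : Even a := by rw [ha2]; exact (even_sq hcce).add (even_sq hdde)
    rw [hp] at hev
    exact (Int.not_odd_iff_even.mpr hev) ⟨p, by ring⟩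
  · obtain ⟨s₁, e₁, z₁, h1, h2, h3, h4, h5, h6⟩ :=
      Rstep hddpos hccpos hddo hcce hcopcd.symm
        (show s^2 = dd^4 + 3*dd^2*cc^2 + cc^4 by linear_combination hs2)
    refine ⟨s₁, e₁, z₁, h1, h2, h3, h4, ?_, h6⟩
    have hdc : dd*cc = e := by rw [he_cd]; ring
    linarith
  · obtain ⟨s₁, e₁, z₁, h1, h2, h3, h4, h5, h6⟩ :=
      Rstep hccpos hddpos hcco hdde hcopcd hs2
    refine ⟨s₁, e₁, z₁, h1, h2, h3, h4, ?_, h6⟩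
    have hdc : cc*dd = e := he_cd.symm
    linarith
  · exfalso
    have hev : Even a := by rw [ha2]; exact (odd_sq hcco).add_odd (odd_sq hddo)
    rw [hp] at hev
    exact (Int.not_odd_iff_even.mpr hev) ⟨p, by ring⟩

/-- Contradiction in the case `s² > 5e²`, `s`, `e` both odd (impossible mod 8). -/
lemma contr_pos_both_odd {s e z : ℤ} (he : 0 < e) (hz : 0 < z)
    (hcop : IsCoprime s e) (heq : z^2 = (s^2-e^2)*(s^2-5*e^2)) (hBpos : 0 < s^2-5*e^2)
    (hsodd : Odd s) (heodd : Odd e) : False := by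
  have hApos : 0 < s^2-e^2 := by nlinarith [he]
  have hcop2 : IsCoprime (e^2 : ℤ) (s^2) := hcop.symm.pow
  obtain ⟨k, hk⟩ := odd_sq_mod8 hsodd
  obtain ⟨l, hl⟩ := odd_sq_mod8 heodd
  have h16 : (4:ℤ)^2 ∣ z^2 := by
    refine ⟨(2*k-2*l)*(2*k-10*l-1), ?_⟩
    linear_combination heq + (s^2-5*e^2)*hk - (s^2-5*e^2)*hl + (4*(2*k-2*l))*hk
      - (20*(2*k-2*l))*hl
  obtain ⟨z₂, hz2⟩ := (Int.pow_dvd_pow_iff two_ne_zero).mp h16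
  have heq₂ : z₂^2 = (2*k-2*l)*(2*k-10*l-1) := by
    have h2 : 16*(z₂^2) = 16*((2*k-2*l)*(2*k-10*l-1)) := by
      linear_combination heq + (s^2-5*e^2)*hk - (s^2-5*e^2)*hl + (4*(2*k-2*l))*hk
        - (20*(2*k-2*l))*hl - (z+4*z₂)*hz2
    linarith
  have hX4 : s^2-e^2 = 4*(2*k-2*l) := by linarith
  have hY4 : s^2-5*e^2 = 4*(2*k-10*l-1) := by linarith
  have hXpos : 0 < 2*k-2*l := by linarith
  have hYpos : 0 < 2*k-10*l-1 := by linarith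
  have hcopXY : IsCoprime (2*k-2*l) (2*k-10*l-1) :=
    isCoprime_of_linear hcop2 1 (-1) 5 (-1) (by linarith) (by linarith)
  obtain ⟨a, hapos, ha⟩ := sq_of_coprime_pos hcopXY heq₂.symm hXpos
  obtain ⟨b, hbpos, hb⟩ := sq_of_coprime_pos hcopXY.symm
    (show (2*k-10*l-1)*(2*k-2*l) = z₂^2 by linear_combination -heq₂) hYpos
  have haeven : Even a := even_of_sq_even ⟨k-l, by ring⟩ ha
  have hbodd : Odd b := odd_of_sq_odd ⟨k-5*l-1, by ring⟩ hb
  have hba : b < a := by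
    by_contra hab
    push_neg at hab
    have : a^2 ≤ b^2 := pow_le_pow_left₀ hapos.le hab 2
    nlinarith [he, hl]
  have hcopab : IsCoprime a b :=
    (hcopXY.of_isCoprime_of_dvd_left ⟨a, by rw [ha]; ring⟩).of_isCoprime_of_dvd_right
      ⟨b, by rw [hb]; ring⟩
  have hsum : (a+b)*(a-b) = e^2 := by
    linear_combination -ha + hb - hl
  obtain ⟨p, hp⟩ := haeven
  obtain ⟨q, hq⟩ := hbodd
  have habodd : Odd (a+b) := ⟨p+q, by omega⟩
  have hcopss : IsCoprime (a+b) (a-b) :=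
    isCoprime_of_linear2 hcopab habodd 1 1 1 (-1) (by ring) (by ring)
  obtain ⟨f, hfpos, hf⟩ := sq_of_coprime_pos hcopss hsum (by linarith)
  obtain ⟨g, hgpos, hg⟩ := sq_of_coprime_pos hcopss.symm
    (show (a-b)*(a+b) = e^2 by linear_combination hsum) (by linarith)
  have hfodd : Odd f := odd_of_sq_odd habodd hf
  have hgodd : Odd g := odd_of_sq_odd (⟨p-q-1, by omega⟩ : Odd (a-b)) hg
  have he2fg : e^2 = f^2*g^2 := by
    linear_combination -hsum + (a-b)*hf + f^2*hg
  have h2b : 2*b = f^2 - g^2 := by linarith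
  have hfin : s^2 = f^4 + 3*f^2*g^2 + g^4 := by
    have hs5 : s^2 = 5*e^2 + 4*b^2 := by linarith
    have h4 : 4*(s^2) = 4*(f^4 + 3*f^2*g^2 + g^4) := by
      linear_combination 4*hs5 + 20*he2fg + (4*(2*b+f^2-g^2))*h2b
    linarith
  exact not_sq_eq_quartic_odd hfodd hgodd hfin

/-- Contradiction in the case `s² < e²`, `s+e` odd (impossible mod 4). -/
lemma contr_neg_opp {s e z : ℤ} (he : 0 < e) (hz : 0 < z)
    (hcop : IsCoprime s e) (heq : z^2 = (s^2-e^2)*(s^2-5*e^2)) (hAneg : s^2-e^2 < 0)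
    (hAodd : Odd (s^2-e^2)) : False := by
  have hcop2 : IsCoprime (e^2 : ℤ) (s^2) := hcop.symm.pow
  have hXodd : Odd (e^2-s^2) := by
    have h3 : e^2-s^2 = -(s^2-e^2) := by ring
    rw [h3]; exact hAodd.neg
  have hXpos : 0 < e^2-s^2 := by linarith
  have hYpos : 0 < 5*e^2-s^2 := by nlinarith [he]
  have hcopXY : IsCoprime (e^2-s^2) (5*e^2-s^2) :=
    isCoprime_of_linear4 hcop2 hXodd (-1) 1 (-5) 1 (by ring) (by ring)
  obtain ⟨a, hapos, ha⟩ := sq_of_coprime_pos hcopXY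
    (show (e^2-s^2)*(5*e^2-s^2) = z^2 by linear_combination -heq) hXpos
  obtain ⟨b, hbpos, hb⟩ := sq_of_coprime_pos hcopXY.symm
    (show (5*e^2-s^2)*(e^2-s^2) = z^2 by linear_combination -heq) hYpos
  have hYodd : Odd (5*e^2-s^2) := by
    have h3 : 5*e^2-s^2 = (e^2-s^2) + 4*e^2 := by ring
    rw [h3]; exact hXodd.add_even ⟨2*e^2, by ring⟩
  have haodd : Odd a := odd_of_sq_odd hXodd ha
  have hbodd : Odd b := odd_of_sq_odd hYodd hb
  have hab : a < b := by
    by_contra hab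
    push_neg at hab
    have : b^2 ≤ a^2 := pow_le_pow_left₀ hbpos.le hab 2
    nlinarith [he]
  have hcopab : IsCoprime a b :=
    (hcopXY.of_isCoprime_of_dvd_left ⟨a, by rw [ha]; ring⟩).of_isCoprime_of_dvd_right
      ⟨b, by rw [hb]; ring⟩
  obtain ⟨p, hp⟩ := haodd
  obtain ⟨q, hq⟩ := hbodd
  obtain ⟨u, hu⟩ : ∃ u, b - a = 2*u := ⟨q - p, by omega⟩
  obtain ⟨v, hv⟩ : ∃ v, b + a = 2*v := ⟨p + q + 1, by omega⟩
  have huv : v*u = e^2 := by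
    have h4 : 4*(v*u) = 4*e^2 := by
      linear_combination -hb + ha - (a+b)*hu - 2*u*hv
    linarith
  have hupos : 0 < u := by omega
  have hvpos : 0 < v := by omega
  have hcopvu : IsCoprime v u :=
    isCoprime_of_linear hcopab.symm 1 1 1 (-1) (by omega) (by omega)
  obtain ⟨cc, hccpos, hcc⟩ := sq_of_coprime_pos hcopvu huv hvpos
  obtain ⟨dd, hddpos, hdd⟩ := sq_of_coprime_pos hcopvu.symm
    (show u*v = e^2 by linear_combination huv) hupos
  have hb2 : b = cc^2 + dd^2 := by rw [← hcc, ← hdd]; omega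
  have ha2 : a = cc^2 - dd^2 := by rw [← hcc, ← hdd]; omega
  have he2cd : e^2 = cc^2*dd^2 := by
    linear_combination -huv + u*hcc + cc^2*hdd
  have hs2 : s^2 = 3*cc^2*dd^2 - cc^4 - dd^4 := by
    linear_combination -ha + he2cd - (a + cc^2 - dd^2)*ha2
  rcases Int.even_or_odd cc with hcce | hcco <;> rcases Int.even_or_odd dd with hdde | hddo
  · exfalso
    have hev : Even b := by rw [hb2]; exact (even_sq hcce).add (even_sq hdde)
    rw [hq] at hev
    exact (Int.not_odd_iff_even.mpr hev) ⟨q, by ring⟩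
  · exact not_sq_eq_quartic_even_odd hcce hddo hs2
  · exact not_sq_eq_quartic_even_odd hdde hcco
      (show s^2 = 3*dd^2*cc^2 - dd^4 - cc^4 by linear_combination hs2)
  · exfalso
    have hev : Even b := by rw [hb2]; exact (odd_sq hcco).add_odd (odd_sq hddo)
    rw [hq] at hev
    exact (Int.not_odd_iff_even.mpr hev) ⟨q, by ring⟩

/-- Descent in the case `s² < e²`, `s`, `e` both odd. -/
lemma descent_neg_both_odd {s e z : ℤ} (hspos : 0 < s) (he : 0 < e) (hz : 0 < z)
    (hcop : IsCoprime s e) (heq : z^2 = (s^2-e^2)*(s^2-5*e^2)) (hAneg : s^2-e^2 < 0)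
    (hsodd : Odd s) (heodd : Odd e) :
    ∃ s₁ e₁ z₁ : ℤ, IsCoprime s₁ e₁ ∧ 0 ≤ s₁ ∧ 0 < e₁ ∧ 0 < z₁ ∧ e₁ < e ∧
      z₁^2 = (s₁^2-e₁^2)*(s₁^2-5*e₁^2) := by
  have hcop2 : IsCoprime (e^2 : ℤ) (s^2) := hcop.symm.pow
  obtain ⟨k, hk⟩ := odd_sq_mod8 hsodd
  obtain ⟨l, hl⟩ := odd_sq_mod8 heodd
  have hX4 : e^2-s^2 = 4*(2*l-2*k) := by linarith
  have hY4 : 5*e^2-s^2 = 4*(10*l-2*k+1) := by linarith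
  have hXpos : 0 < 2*l-2*k := by linarith
  have hYpos : 0 < 10*l-2*k+1 := by nlinarith [he]
  have h16 : (4:ℤ)^2 ∣ z^2 := by
    refine ⟨(2*l-2*k)*(10*l-2*k+1), ?_⟩
    linear_combination heq + (5*e^2-s^2)*hX4 + (4*(2*l-2*k))*hY4
  obtain ⟨z₂, hz2⟩ := (Int.pow_dvd_pow_iff two_ne_zero).mp h16
  have heq₂ : z₂^2 = (2*l-2*k)*(10*l-2*k+1) := by
    have h2 : 16*(z₂^2) = 16*((2*l-2*k)*(10*l-2*k+1)) := by
      linear_combination heq + (5*e^2-s^2)*hX4 + (4*(2*l-2*k))*hY4 - (z+4*z₂)*hz2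
    linarith
  have hcopXY : IsCoprime (2*l-2*k) (10*l-2*k+1) :=
    isCoprime_of_linear hcop2 (-1) 1 (-5) 1 (by linarith) (by linarith)
  obtain ⟨a, hapos, ha⟩ := sq_of_coprime_pos hcopXY heq₂.symm hXpos
  obtain ⟨b, hbpos, hb⟩ := sq_of_coprime_pos hcopXY.symm
    (show (10*l-2*k+1)*(2*l-2*k) = z₂^2 by linear_combination -heq₂) hYpos
  have haeven : Even a := even_of_sq_even ⟨l-k, by ring⟩ ha
  have hbodd : Odd b := odd_of_sq_odd ⟨5*l-k, by ring⟩ hb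
  have hba : a < b := by
    by_contra hab
    push_neg at hab
    have : b^2 ≤ a^2 := pow_le_pow_left₀ hbpos.le hab 2
    nlinarith [he, hl]
  have hcopab : IsCoprime a b :=
    (hcopXY.of_isCoprime_of_dvd_left ⟨a, by rw [ha]; ring⟩).of_isCoprime_of_dvd_right
      ⟨b, by rw [hb]; ring⟩
  -- Pythagorean triple s² + (2a)² = e²
  have heq' : e^2 = s^2 + 4*a^2 := by linarith
  have hcopsa : IsCoprime s a := by
    obtain ⟨x, y, hxy⟩ := hcop2
    exact ⟨(x+y)*s, 4*x*a, by linear_combination hxy - x*heq'⟩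
  have hcops2 : IsCoprime s 2 := by
    obtain ⟨t, ht⟩ := hsodd
    exact ⟨1, -t, by linarith⟩
  have hcops2a : IsCoprime s (2*a) := hcops2.mul_right hcopsa
  have hgcdsa : Int.gcd s (2*a) = 1 := Int.isCoprime_iff_gcd_eq_one.mp hcops2a
  have hPT : PythagoreanTriple s (2*a) e := by
    show s*s + (2*a)*(2*a) = e*e
    linear_combination -heq'
  obtain ⟨m, n, hs_eq, h2a, he_eq, hmn, hpar, hm0⟩ :=
    PythagoreanTriple.coprime_classification' hPT hgcdsa (Int.odd_iff.mp hsodd) he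
  have ha_mn : a = m*n := by linarith
  have hmnpos : 0 < m*n := by linarith
  have hmpos : 0 < m := lt_of_le_of_ne hm0 (by rintro rfl; simp at hmnpos)
  have hnpos : 0 < n := by
    rcases mul_pos_iff.mp hmnpos with ⟨-, hn⟩ | ⟨hm', -⟩
    · exact hn
    · linarith
  have hmncop : IsCoprime m n := Int.isCoprime_iff_gcd_eq_one.mpr hmn
  have hbmn : b^2 = m^4 + 3*m^2*n^2 + n^4 := by
    have hba2 : b^2 = a^2 + e^2 := by linarith
    linear_combination hba2 + (a + m*n)*ha_mn + (e + m^2 + n^2)*he_eq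
  -- bound: 2a < e
  have h2alt : 2*a < e := by
    by_contra hle
    push_neg at hle
    have : e^2 ≤ (2*a)^2 := pow_le_pow_left₀ he.le hle 2
    nlinarith [hspos]
  rcases hpar with ⟨hm2, hn2⟩ | ⟨hm2, hn2⟩
  · -- m even, n odd : apply Rstep with (n, m)
    obtain ⟨s₁, e₁, z₁, h1, h2, h3, h4, h5, h6⟩ :=
      Rstep hnpos hmpos (Int.odd_iff.mpr hn2) (Int.even_iff.mpr hm2) hmncop.symm
        (show b^2 = n^4 + 3*n^2*m^2 + m^4 by linear_combination hbmn)
    refine ⟨s₁, e₁, z₁, h1, h2, h3, h4, ?_, h6⟩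
    have hnm : n*m = a := by rw [ha_mn]; ring
    linarith
  · -- m odd, n even : apply Rstep with (m, n)
    obtain ⟨s₁, e₁, z₁, h1, h2, h3, h4, h5, h6⟩ :=
      Rstep hmpos hnpos (Int.odd_iff.mpr hm2) (Int.even_iff.mpr hn2) hmncop
        (show b^2 = m^4 + 3*m^2*n^2 + n^4 by linear_combination hbmn)
    refine ⟨s₁, e₁, z₁, h1, h2, h3, h4, ?_, h6⟩
    have hnm : m*n = a := ha_mn.symm
    linarith

/-- The central descent lemma: the quartic `z² = (s²-e²)(s²-5e²)` has no integral points
with `e ≠ 0`, `z ≠ 0` and `s`, `e` coprime. -/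
lemma Qpos : ∀ N : ℕ, ∀ s e z : ℤ, e.natAbs ≤ N → 0 ≤ s → 0 < e → 0 < z →
    IsCoprime s e → z^2 = (s^2 - e^2)*(s^2 - 5*e^2) → False := by
  intro N
  induction N using Nat.strong_induction_on with
  | _ N IH =>
  intro s e z heN hs he hz hcop heq
  have hs0 : s ≠ 0 := by
    rintro rfl
    have hu : IsUnit e := isCoprime_zero_left.mp hcop
    rcases Int.isUnit_iff.mp hu with rfl | rfl
    · have h5 : z^2 = 5 := by linarith [heq]
      have h1 : z ≤ 2 := by nlinarith [h5]
      interval_cases z <;> norm_num at h5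
    · linarith
  have hspos : 0 < s := lt_of_le_of_ne hs (Ne.symm hs0)
  have hzsq : 0 < z^2 := pow_pos hz 2
  have hABpos : 0 < (s^2-e^2)*(s^2-5*e^2) := by rw [← heq]; exact hzsq
  have hnotboth : ¬ (Even s ∧ Even e) := by
    rintro ⟨⟨k, hk⟩, ⟨l, hl⟩⟩
    obtain ⟨u, v, huv⟩ := hcop
    have h2 : (2:ℤ) ∣ 1 := ⟨u*k+v*l, by rw [← huv, hk, hl]; ring⟩
    norm_num at h2
  -- descent cases produce a smaller solution; contradiction cases close directly
  have hsmaller : ∃ s₁ e₁ z₁ : ℤ, IsCoprime s₁ e₁ ∧ 0 ≤ s₁ ∧ 0 < e₁ ∧ 0 < z₁ ∧ e₁ < e ∧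
      z₁^2 = (s₁^2-e₁^2)*(s₁^2-5*e₁^2) := by
    rcases mul_pos_iff.mp hABpos with ⟨hApos, hBpos⟩ | ⟨hAneg, hBneg⟩
    · rcases Int.even_or_odd s with hse | hso <;> rcases Int.even_or_odd e with hee | heo
      · exact absurd ⟨hse, hee⟩ hnotboth
      · exact descent_pos_opp he hz hcop heq hBpos ((even_sq hse).sub_odd (odd_sq heo))
      · exact descent_pos_opp he hz hcop heq hBpos ((odd_sq hso).sub_even (even_sq hee))
      · exact absurd (contr_pos_both_odd he hz hcop heq hBpos hso heo) not_false
    · rcases Int.even_or_odd s with hse | hso <;> rcases Int.even_or_odd e with hee | heo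
      · exact absurd ⟨hse, hee⟩ hnotboth
      · exact absurd (contr_neg_opp he hz hcop heq hAneg
          ((even_sq hse).sub_odd (odd_sq heo))) not_false
      · exact absurd (contr_neg_opp he hz hcop heq hAneg
          ((odd_sq hso).sub_even (even_sq hee))) not_false
      · exact descent_neg_both_odd hspos he hz hcop heq hAneg hso heo
  obtain ⟨s₁, e₁, z₁, h1, h2, h3, h4, h5, h6⟩ := hsmaller
  have hlt : e₁.natAbs < N := by
    have h7 : e₁.natAbs < e.natAbs := Int.natAbs_lt_natAbs_of_nonneg_of_lt h3.le h5
    omega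
  exact IH e₁.natAbs hlt s₁ e₁ z₁ le_rfl h2 h3 h4 h1 h6

theorem Qlem {s e z : ℤ} (hcop : IsCoprime s e) (he : e ≠ 0)
    (heq : z^2 = (s^2-e^2)*(s^2-5*e^2)) : z = 0 := by
  by_contra hz
  have habs : (|z|)^2 = ((|s|)^2 - (|e|)^2)*((|s|)^2 - 5*(|e|)^2) := by
    simp only [sq_abs]; exact heq
  have hcop' : IsCoprime |s| |e| := by
    rcases abs_choice s with h1 | h1 <;> rcases abs_choice e with h2 | h2 <;> rw [h1, h2]
    exacts [hcop, hcop.neg_right, hcop.neg_left, hcop.neg_left.neg_right]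
  exact Qpos (|e|).natAbs |s| |e| |z| le_rfl (abs_nonneg s) (abs_pos.mpr he)
    (abs_pos.mpr hz) hcop' habs

/-- No integral points: `n² = m(m-e²)(m-5e²)` with `m`, `e` coprime and `e ≠ 0` forces `n = 0`. -/
theorem Llem {m e n : ℤ} (hcop : IsCoprime m e) (he : e ≠ 0)
    (heq : n^2 = m*(m-e^2)*(m-5*e^2)) : n = 0 := by
  by_contra hn
  have he2 : (0:ℤ) < e^2 := by positivity
  have hmpos : 0 < m := by
    rcases lt_trichotomy m 0 with h | h | h
    · have h1 : m - e^2 < 0 := by linarith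
      have h2 : m - 5*e^2 < 0 := by linarith
      have h3 : m*(m-e^2) > 0 := mul_pos_of_neg_of_neg h h1
      have h4 : m*(m-e^2)*(m-5*e^2) < 0 := mul_neg_of_pos_of_neg h3 h2
      nlinarith [sq_nonneg n]
    · rw [h] at heq
      simp at heq
      exact (hn heq).elim
    · exact h
  by_cases h5 : (5:ℤ) ∣ m
  · obtain ⟨m₁, rfl⟩ := h5
    have hm1pos : 0 < m₁ := by linarith
    have hcop₁ : IsCoprime m₁ e := hcop.of_isCoprime_of_dvd_left (dvd_mul_left m₁ 5)
    have key : n^2 = 25*(m₁*(m₁-e^2)*(5*m₁-e^2)) := by linear_combination heq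
    have h25 : (5:ℤ)^2 ∣ n^2 := ⟨m₁*(m₁-e^2)*(5*m₁-e^2), by linear_combination key⟩
    obtain ⟨n₁, rfl⟩ := (Int.pow_dvd_pow_iff two_ne_zero).mp h25
    have heq₁ : n₁^2 = m₁*(m₁-e^2)*(5*m₁-e^2) := by
      have h2 : 25*(n₁^2) = 25*(m₁*(m₁-e^2)*(5*m₁-e^2)) := by linear_combination key
      linarith
    have c1 : IsCoprime m₁ (m₁-e^2) := by
      have h1 : IsCoprime m₁ (e^2) := hcop₁.pow_right
      have h2 := (h1.neg_right).add_mul_left_right 1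
      have h3 : -e^2 + m₁*1 = m₁ - e^2 := by ring
      rwa [h3] at h2
    have c2 : IsCoprime m₁ (5*m₁-e^2) := by
      have h1 : IsCoprime m₁ (e^2) := hcop₁.pow_right
      have h2 := (h1.neg_right).add_mul_left_right 5
      have h3 : -e^2 + m₁*5 = 5*m₁ - e^2 := by ring
      rwa [h3] at h2
    obtain ⟨t, htpos, ht⟩ := sq_of_coprime_pos (c1.mul_right c2)
      (show m₁*((m₁-e^2)*(5*m₁-e^2)) = n₁^2 by linear_combination -heq₁) hm1pos
    subst ht
    have ht2 : t^2 ∣ n₁^2 := ⟨(t^2-e^2)*(5*t^2-e^2), by linear_combination heq₁⟩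
    obtain ⟨z, rfl⟩ := (Int.pow_dvd_pow_iff two_ne_zero).mp ht2
    have heqz : z^2 = (e^2-t^2)*(e^2-5*t^2) := by
      have h2 : t^2*(z^2) = t^2*((e^2-t^2)*(e^2-5*t^2)) := by linear_combination heq₁
      exact mul_left_cancel₀ (pow_ne_zero 2 htpos.ne') h2
    have hcopet : IsCoprime e t := hcop₁.symm.of_isCoprime_of_dvd_right ⟨t, by ring⟩
    have hz0 := Qlem hcopet htpos.ne' heqz
    exact hn (by rw [hz0]; ring)
  · have hcop5 : IsCoprime m 5 := by
      rw [Int.isCoprime_iff_gcd_eq_one]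
      have hd : (Int.gcd m 5 : ℤ) ∣ 5 := Int.gcd_dvd_right _ _
      have hd' : Int.gcd m 5 ∣ 5 := by exact_mod_cast hd
      rcases (Nat.prime_five.eq_one_or_self_of_dvd _ hd') with h1 | h1
      · exact h1
      · exfalso
        apply h5
        have hdm : (Int.gcd m 5 : ℤ) ∣ m := Int.gcd_dvd_left _ _
        rw [h1] at hdm
        exact_mod_cast hdm
    have c1 : IsCoprime m (m-e^2) := by
      have h1 : IsCoprime m (e^2) := hcop.pow_right
      have h2 := (h1.neg_right).add_mul_left_right 1
      have h3 : -e^2 + m*1 = m - e^2 := by ring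
      rwa [h3] at h2
    have c2 : IsCoprime m (m-5*e^2) := by
      have h1 : IsCoprime m (5*e^2) := hcop5.mul_right (hcop.pow_right)
      have h2 := (h1.neg_right).add_mul_left_right 1
      have h3 : -(5*e^2) + m*1 = m - 5*e^2 := by ring
      rwa [h3] at h2
    obtain ⟨t, htpos, ht⟩ := sq_of_coprime_pos (c1.mul_right c2)
      (show m*((m-e^2)*(m-5*e^2)) = n^2 by linear_combination -heq) hmpos
    subst ht
    have ht2 : t^2 ∣ n^2 := ⟨(t^2-e^2)*(t^2-5*e^2), by linear_combination heq⟩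
    obtain ⟨z, rfl⟩ := (Int.pow_dvd_pow_iff two_ne_zero).mp ht2
    have heqz : z^2 = (t^2-e^2)*(t^2-5*e^2) := by
      have h2 : t^2*(z^2) = t^2*((t^2-e^2)*(t^2-5*e^2)) := by linear_combination heq
      exact mul_left_cancel₀ (pow_ne_zero 2 htpos.ne') h2
    have hcopte : IsCoprime t e := hcop.of_isCoprime_of_dvd_left ⟨t, by ring⟩
    have hz0 := Qlem hcopte he heqz
    exact hn (by rw [hz0]; ring)

/-- The curve `y² = x(x-1)(x-5)` has no rational points with `y ≠ 0`. -/
theorem ratlem (x y : ℚ) (h : y^2 = x^3 - 6*x^2 + 5*x) : y = 0 := by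
  by_contra hy
  have hD0 : (0:ℤ) < (x.den : ℤ) := by exact_mod_cast x.pos
  have hS0 : (0:ℤ) < (y.den : ℤ) := by exact_mod_cast y.pos
  have key : (y.num)^2 * ((x.den:ℤ))^3 =
      ((y.den:ℤ))^2 * (x.num*(x.num-(x.den:ℤ))*(x.num-5*(x.den:ℤ))) := by
    have hx : ((x.num : ℚ))/((x.den:ℚ)) = x := Rat.num_div_den x
    have hy' : ((y.num : ℚ))/((y.den:ℚ)) = y := Rat.num_div_den y
    have hDQ : ((x.den:ℚ)) ≠ 0 := by positivity
    have hSQ : ((y.den:ℚ)) ≠ 0 := by positivity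
    have e1 : (y.num : ℚ) = y * (y.den:ℚ) := (div_eq_iff hSQ).mp hy'
    have e2 : (x.num : ℚ) = x * (x.den:ℚ) := (div_eq_iff hDQ).mp hx
    have h3 : ((y.num:ℚ))^2 * ((x.den:ℚ))^3 =
        ((y.den:ℚ))^2 * ((x.num:ℚ)*((x.num:ℚ)-(x.den:ℚ))*((x.num:ℚ)-5*(x.den:ℚ))) := by
      rw [e1, e2]
      linear_combination ((y.den:ℚ))^2*((x.den:ℚ))^3 * h
    exact_mod_cast h3
  have hND : IsCoprime (x.num) ((x.den:ℤ)) := by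
    rw [Int.isCoprime_iff_gcd_eq_one]
    simpa [Int.gcd] using x.reduced
  have hrS : IsCoprime (y.num) ((y.den:ℤ)) := by
    rw [Int.isCoprime_iff_gcd_eq_one]
    simpa [Int.gcd] using y.reduced
  set N := x.num
  set D := (x.den : ℤ)
  set r := y.num
  set S := (y.den : ℤ)
  have hKD : IsCoprime (N*(N-D)*(N-5*D)) D := by
    have c1 : IsCoprime (N-D) D := by
      have h2 := hND.add_mul_right_left (-1)
      have h3 : N + (-1)*D = N - D := by ring
      rwa [h3] at h2
    have c2 : IsCoprime (N-5*D) D := by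
      have h2 := hND.add_mul_right_left (-5)
      have h3 : N + (-5)*D = N - 5*D := by ring
      rwa [h3] at h2
    exact (hND.mul_left c1).mul_left c2
  have hS2D3 : S^2 ∣ D^3 := by
    have hd : S^2 ∣ r^2*D^3 := ⟨N*(N-D)*(N-5*D), key⟩
    exact (hrS.symm.pow).dvd_of_dvd_mul_left hd
  have hD3S2 : D^3 ∣ S^2 := by
    have hd : D^3 ∣ S^2*(N*(N-D)*(N-5*D)) := ⟨r^2, by linear_combination -key⟩
    exact ((hKD.symm).pow_left).dvd_of_dvd_mul_right hd
  have hSD : S^2 = D^3 := Int.dvd_antisymm (by positivity) (by positivity) hS2D3 hD3S2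
  have hDS : D ∣ S := by
    have h2 : D^2 ∣ S^2 := by rw [hSD]; exact ⟨D, by ring⟩
    exact (Int.pow_dvd_pow_iff two_ne_zero).mp h2
  obtain ⟨E, hE⟩ := hDS
  have he2 : E^2 = D := by
    have h2 : D^2*(E^2) = D^2*D := by linear_combination hSD - (S+D*E)*hE
    exact mul_left_cancel₀ (pow_ne_zero 2 hD0.ne') h2
  have hr2 : r^2 = N*(N-D)*(N-5*D) := by
    have h2 : D^3*(r^2) = D^3*(N*(N-D)*(N-5*D)) := by
      linear_combination key + (N*(N-D)*(N-5*D))*hSD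
    exact mul_left_cancel₀ (pow_ne_zero 3 hD0.ne') h2
  have hcopNe : IsCoprime N E := hND.of_isCoprime_of_dvd_right ⟨E, by rw [← he2]; ring⟩
  have he0 : E ≠ 0 := by
    rintro rfl
    rw [← he2] at hD0
    norm_num at hD0
  have hrfin : r^2 = N*(N-E^2)*(N-5*E^2) := by rw [he2]; exact hr2
  have hr0 : r ≠ 0 := fun h0 => hy (Rat.num_eq_zero.mp h0)
  exact hr0 (Llem hcopNe he0 hrfin)

end E3Twist

/-- Corollary 4.2 of the paper: the elliptic curve `E₃ : y² = x(x − 1)(x − 1/5)` over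
`ℚ` has a quadratic twist of rank `0`: there is a nonzero rational `d` such that every
rational point of the twist `E₃^(d) : y² = x(x − d)(x − d/5)`, i.e.
`y² = x³ − (d + d/5)x² + (d·d/5)x`, has finite order. -/
theorem E_three_has_twist_of_rank_zero :
    ∃ d : ℚ, d ≠ 0 ∧
      ∀ P : WeierstrassCurve.Affine.Point
          ({ a₁ := 0, a₂ := -(d + d / 5), a₃ := 0, a₄ := d * d / 5, a₆ := 0 } :
            WeierstrassCurve.Affine ℚ),
        ∃ n : ℕ, 0 < n ∧ n • P = 0 := by
  refine ⟨5, by norm_num, fun P => ⟨2, two_pos, ?_⟩⟩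
  induction P with
  | zero =>
    show (2:ℕ) • (0 : WeierstrassCurve.Affine.Point _) = 0
    rw [two_smul]
    exact zero_add 0
  | some _ _ h =>
    rename_i x y
    have heq : y^2 = x^3 - 6*x^2 + 5*x := by
      have h1 := h.1
      rw [WeierstrassCurve.Affine.equation_iff] at h1
      norm_num at h1
      linear_combination h1
    have hy0 : y = 0 := E3Twist.ratlem x y heq
    subst hy0
    have key : ∀ (y' : ℚ) (hy' : WeierstrassCurve.Affine.Nonsingular
        ({ a₁ := 0, a₂ := -((5:ℚ) + 5 / 5), a₃ := 0, a₄ := 5 * 5 / 5, a₆ := 0 } :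
          WeierstrassCurve.Affine ℚ) x y'), y' = 0 →
        WeierstrassCurve.Affine.Point.some _ _ hy' = WeierstrassCurve.Affine.Point.some _ _ h := by
      intro y' hy' hh
      subst hh
      rfl
    have hY : WeierstrassCurve.Affine.negY
        ({ a₁ := 0, a₂ := -((5:ℚ) + 5 / 5), a₃ := 0, a₄ := 5 * 5 / 5, a₆ := 0 } :
          WeierstrassCurve.Affine ℚ) x 0 = 0 := by
      simp [WeierstrassCurve.Affine.negY]
    have hneg : -(WeierstrassCurve.Affine.Point.some _ _ h) = WeierstrassCurve.Affine.Point.some _ _ h := by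
      rw [WeierstrassCurve.Affine.Point.neg_some]
      exact key _ _ hY
    rw [two_smul]
    nth_rewrite 2 [← hneg]
    exact add_neg_cancel _
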